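/- Let k ≥ 2 and for t ∈ (0, 1/(k−1)) let ℒ_t = (t, t, …, t, 1−(k−1)t) ∈ Δ_k be the volume-one metric structure assigning length t to a_1, …, a_{k−1} and length 1−(k−1)t to a_k. Then the volume entropy satisfies lim_{t→0} h_{ℒ_t} = ∞. -/

import Mathlib

open Filter Topology
open scoped ENNReal

namespace McShane

/-- The ℒ-weighted length of the freely reduced form of `g`: the sum of `L i`
over all occurrences of `aᵢ^{±1}` in the reduced word of `g`. -/
noncomputable def wlen {k : ℕ} (L : Fin k → ℝ) (g : FreeGroup (Fin k)) : ℝ :=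
  ((FreeGroup.toWord g).map fun x => L x.1).sum

/-- The hyperbolic length of a conjugacy class: the infimum of the ℒ-weighted
lengths of its representatives. For positive edge lengths this equals
`∑ mᵢ·L i` where `mᵢ` counts occurrences of `aᵢ^{±1}` in the cyclically reduced form. -/
noncomputable def hlen {k : ℕ} (L : Fin k → ℝ) (c : ConjClasses (FreeGroup (Fin k))) : ℝ :=
  sInf (wlen L '' c.carrier)

/-- The open simplex `Δ_k` of volume-one metric structures on the wedge of `k` circles. -/
def simplex (k : ℕ) : Set (Fin k → ℝ) :=
  {L | (∀ i, 0 < L i) ∧ ∑ i, L i = 1}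

/-- The barycentric point `ℒ* = (1/k, …, 1/k)`. -/
noncomputable def Lstar (k : ℕ) : Fin k → ℝ := fun _ => 1 / k

/-- `g` is primitive iff it belongs to some free basis of the free group,
equivalently it is the image of a basis element under an automorphism. -/
def IsPrimitive {k : ℕ} (g : FreeGroup (Fin k)) : Prop :=
  ∃ (e : FreeGroup (Fin k) ≃* FreeGroup (Fin k)) (i : Fin k), e (FreeGroup.of i) = g

/-- `C_f(ℒ) = ∑_{w ∈ 𝒞_k} f(ℓ_ℒ(w))`, the sum over all nontrivial conjugacy classes. -/
noncomputable def Cf {k : ℕ} (f : ℝ → ℝ) (L : Fin k → ℝ) : ℝ≥0∞ :=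
  ∑' c : {c : ConjClasses (FreeGroup (Fin k)) // c ≠ 1}, ENNReal.ofReal (f (hlen L c.1))

/-- `P_f(ℒ) = ∑_{w ∈ 𝒫_k} f(ℓ_ℒ(w))`, the sum over conjugacy classes of primitive elements. -/
noncomputable def Pf {k : ℕ} (f : ℝ → ℝ) (L : Fin k → ℝ) : ℝ≥0∞ :=
  ∑' c : {c : ConjClasses (FreeGroup (Fin k)) // ∃ g, IsPrimitive g ∧ ConjClasses.mk g = c},
    ENNReal.ofReal (f (hlen L c.1))

/-- The volume entropy of a metric structure `L` on the wedge of `k` circles.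
For positive edge lengths the `limsup` below is in fact a limit. -/
noncomputable def entropy {k : ℕ} (L : Fin k → ℝ) : ℝ :=
  limsup (fun R : ℝ =>
    Real.log (Nat.card {g : FreeGroup (Fin k) // wlen L g ≤ R}) / R) atTop

/-! ### Auxiliary lemmas -/

/-- `reduce` is the identity on words all of whose letters are positive. -/
lemma reduce_eq_self_of_pos {α} [DecidableEq α] {w : List (α × Bool)}
    (h : ∀ x ∈ w, x.2 = true) : FreeGroup.reduce w = w := by
  induction w with
  | nil => rfl
  | cons x L ih =>
    rw [FreeGroup.reduce.cons, ih (fun y hy => h y (List.mem_cons_of_mem x hy))]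
    cases L with
    | nil => rfl
    | cons hd tl =>
      have hx : x.2 = true := h x List.mem_cons_self
      have hh : hd.2 = true := h hd (by simp)
      simp [hx, hh]

lemma wlen_mk {k} (L : Fin k → ℝ) {w : List (Fin k × Bool)} (h : ∀ x ∈ w, x.2 = true) :
    wlen L (FreeGroup.mk w) = (w.map fun x => L x.1).sum := by
  rw [wlen, FreeGroup.toWord_mk, reduce_eq_self_of_pos h]

lemma repl_cancel {γ} {x y : γ} (hxy : x ≠ y) :
    ∀ (j1 j2 : ℕ) (t1 t2 : List γ),
    List.replicate j1 x ++ y :: t1 = List.replicate j2 x ++ y :: t2 → j1 = j2 ∧ t1 = t2 := by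
  intro j1
  induction j1 with
  | zero =>
    intro j2 t1 t2 h
    cases j2 with
    | zero => simpa using h
    | succ j2 =>
      rw [List.replicate_succ] at h
      simp only [List.replicate_zero, List.nil_append, List.cons_append, List.cons.injEq] at h
      exact absurd h.1.symm hxy
  | succ j1 ih =>
    intro j2 t1 t2 h
    cases j2 with
    | zero =>
      rw [List.replicate_succ] at h
      simp only [List.replicate_zero, List.nil_append, List.cons_append, List.cons.injEq] at h
      exact absurd h.1 hxy
    | succ j2 =>
      rw [List.replicate_succ, List.replicate_succ] at h
      simp only [List.cons_append, List.cons.injEq, true_and] at h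
      obtain ⟨h1, h2⟩ := ih j2 t1 t2 h
      exact ⟨by omega, h2⟩

/-- Encoding of a list of naturals as a word `x^{j₁} y x^{j₂} y ⋯`. -/
def encL {γ : Type*} (x y : γ) (l : List ℕ) : List γ :=
  l.flatMap fun j => List.replicate j x ++ [y]

lemma encL_cons {γ} (x y : γ) (j : ℕ) (l : List ℕ) :
    encL x y (j :: l) = List.replicate j x ++ y :: encL x y l := by
  simp [encL, List.flatMap_cons]

lemma encL_injective {γ} {x y : γ} (hxy : x ≠ y) : Function.Injective (encL x y) := by
  intro l1 l2 h
  induction l1 generalizing l2 with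
  | nil =>
    cases l2 with
    | nil => rfl
    | cons j l => simp [encL, encL_cons] at h
  | cons j1 t1 ih =>
    cases l2 with
    | nil => simp [encL, encL_cons] at h
    | cons j2 t2 =>
      rw [encL_cons, encL_cons] at h
      obtain ⟨h1, h2⟩ := repl_cancel hxy j1 j2 _ _ h
      rw [h1, ih h2]

lemma encL_sum {γ} (x y : γ) (f : γ → ℝ) (l : List ℕ) :
    ((encL x y l).map f).sum = (l.sum : ℝ) * f x + (l.length : ℝ) * f y := by
  induction l with
  | nil => simp [encL]
  | cons j l ih =>
    rw [encL_cons]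
    simp only [List.map_append, List.sum_append, List.map_replicate, List.sum_replicate,
      List.map_cons, List.sum_cons, nsmul_eq_mul, ih, List.length_cons]
    push_cast
    ring

lemma encL_pos {γ} (x y : γ) (l : List ℕ) :
    ∀ z ∈ encL (x, true) (y, true) l, z.2 = true := by
  intro z hz
  simp only [encL, List.mem_flatMap, List.mem_append, List.mem_replicate,
    List.mem_singleton] at hz
  obtain ⟨j, _, hj⟩ := hz
  rcases hj with h | h
  · rw [h.2]
  · rw [h]

lemma toWord_len_le {k : ℕ} {L : Fin k → ℝ} {ε : ℝ} (hε : 0 < ε) (hL : ∀ i, ε ≤ L i)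
    {R : ℝ} {g : FreeGroup (Fin k)} (hg : wlen L g ≤ R) :
    (FreeGroup.toWord g).length ≤ ⌈R / ε⌉₊ := by
  have h1 : ((FreeGroup.toWord g).map fun x => L x.1).length • ε ≤ wlen L g := by
    apply List.card_nsmul_le_sum
    intro x hx
    obtain ⟨y, _, rfl⟩ := List.mem_map.mp hx
    exact hL y.1
  rw [List.length_map, nsmul_eq_mul] at h1
  have h2 : ((FreeGroup.toWord g).length : ℝ) ≤ R / ε := by
    rw [le_div_iff₀ hε]
    exact le_trans h1 hg
  exact_mod_cast h2.trans (Nat.le_ceil _)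

lemma ball_inj {k : ℕ} {L : Fin k → ℝ} {ε : ℝ} (hε : 0 < ε) (hL : ∀ i, ε ≤ L i) (R : ℝ) :
    Function.Injective (fun g : {g : FreeGroup (Fin k) // wlen L g ≤ R} =>
      (fun i : Fin (⌈R / ε⌉₊ + 1) => (FreeGroup.toWord g.1)[(i : ℕ)]?)) := by
  intro g1 g2 h
  have hw : FreeGroup.toWord g1.1 = FreeGroup.toWord g2.1 := by
    apply List.ext_getElem?
    intro n
    by_cases hn : n < ⌈R / ε⌉₊ + 1
    · exact congrFun h ⟨n, hn⟩
    · rw [List.getElem?_eq_none, List.getElem?_eq_none]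
      · exact le_trans (toWord_len_le hε hL g2.2) (by omega)
      · exact le_trans (toWord_len_le hε hL g1.2) (by omega)
  exact Subtype.ext (FreeGroup.toWord_injective hw)

lemma ball_finite {k : ℕ} {L : Fin k → ℝ} {ε : ℝ} (hε : 0 < ε) (hL : ∀ i, ε ≤ L i) (R : ℝ) :
    Finite {g : FreeGroup (Fin k) // wlen L g ≤ R} :=
  Finite.of_injective _ (ball_inj hε hL R)

lemma ball_card_le {k : ℕ} {L : Fin k → ℝ} {ε : ℝ} (hε : 0 < ε) (hL : ∀ i, ε ≤ L i) (R : ℝ) :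
    Nat.card {g : FreeGroup (Fin k) // wlen L g ≤ R} ≤ (2 * k + 1) ^ (⌈R / ε⌉₊ + 1) := by
  have h := Nat.card_le_card_of_injective _ (ball_inj hε hL R)
  refine h.trans_eq ?_
  simp [Nat.card_eq_fintype_card, mul_comm]

set_option maxHeartbeats 1000000 in
/-- The key quantitative lower bound on the entropy of `ℒ_t`. -/
lemma entropy_ge {k : ℕ} (hk : 2 ≤ k) {t : ℝ}
    (ht : t ∈ Set.Ioo (0:ℝ) (1 / ((k : ℝ) - 1))) :
    Real.log (1 / t) / 4 ≤ entropy (fun i : Fin k =>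
        if (i : ℕ) < k - 1 then t else 1 - ((k : ℝ) - 1) * t) := by
  obtain ⟨ht0, htk⟩ := ht
  set L : Fin k → ℝ := fun i : Fin k =>
    if (i : ℕ) < k - 1 then t else 1 - ((k:ℝ)-1)*t with hLdef
  have hk1 : (1:ℝ) ≤ (k:ℝ) - 1 := by
    have : (2:ℝ) ≤ (k:ℝ) := by exact_mod_cast hk
    linarith
  have hb0 : 0 < 1 - ((k:ℝ)-1) * t := by
    have h := (lt_div_iff₀ (by linarith : (0:ℝ) < (k:ℝ)-1)).mp htk
    nlinarith
  have ht1 : t < 1 := by nlinarith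
  set ε : ℝ := min t (1 - ((k:ℝ)-1)*t) with hεdef
  have hε : 0 < ε := lt_min ht0 hb0
  have hL : ∀ i, ε ≤ L i := by
    intro i
    simp only [hLdef]
    split
    · exact min_le_left _ _
    · exact min_le_right _ _
  obtain ⟨a, ha⟩ : ∃ a : Fin k, (a:ℕ) = 0 := ⟨⟨0, by omega⟩, rfl⟩
  obtain ⟨b, hbv⟩ : ∃ b : Fin k, (b:ℕ) = k - 1 := ⟨⟨k-1, by omega⟩, rfl⟩
  have hLa : L a = t := by
    simp only [hLdef]; rw [ha]; exact if_pos (by omega)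
  have hLb : L b = 1 - ((k:ℝ)-1)*t := by
    simp only [hLdef]; rw [hbv]; exact if_neg (by omega)
  have hab : ((a, true) : Fin k × Bool) ≠ (b, true) := by
    intro h
    have h2 : (a:ℕ) = (b:ℕ) := congrArg (fun p : Fin k × Bool => ((p.1 : Fin k) : ℕ)) h
    rw [ha, hbv] at h2
    omega
  have h1t : (1:ℝ) ≤ 1/t := by
    rw [le_div_iff₀ ht0]; linarith
  -- boundedness of the quantity whose limsup is the entropy
  have hbdd : IsBoundedUnder (· ≤ ·) atTop (fun R : ℝ =>
      Real.log (Nat.card {g : FreeGroup (Fin k) // wlen L g ≤ R}) / R) := by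
    apply isBoundedUnder_of_eventually_le (a := (1/ε + 2) * Real.log (2*(k:ℝ)+1))
    filter_upwards [eventually_ge_atTop (1:ℝ)] with R hR
    haveI hfin := ball_finite hε hL R
    set N := ⌈R/ε⌉₊ with hN
    have hR0 : (0:ℝ) < R := by linarith
    have hlog2k : 0 ≤ Real.log (2*(k:ℝ)+1) := by
      apply Real.log_nonneg
      have hknn : (0:ℝ) ≤ (k:ℝ) := Nat.cast_nonneg k
      linarith
    have hcpos : 0 < Nat.card {g : FreeGroup (Fin k) // wlen L g ≤ R} := by
      haveI hne : Nonempty {g : FreeGroup (Fin k) // wlen L g ≤ R} := by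
        refine ⟨⟨1, ?_⟩⟩
        have h1 : wlen L 1 = 0 := by simp [wlen, FreeGroup.toWord_one]
        rw [h1]; linarith
      exact Nat.card_pos
    have hcpos' : (0:ℝ) < (Nat.card {g : FreeGroup (Fin k) // wlen L g ≤ R} : ℝ) := by
      exact_mod_cast hcpos
    have hcle : ((Nat.card {g : FreeGroup (Fin k) // wlen L g ≤ R}) : ℝ)
        ≤ (((2 * k + 1) ^ (N + 1) : ℕ) : ℝ) := by
      exact_mod_cast ball_card_le hε hL R
    have h1 : Real.log (Nat.card {g : FreeGroup (Fin k) // wlen L g ≤ R})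
        ≤ ((N:ℝ)+1) * Real.log (2*(k:ℝ)+1) := by
      calc Real.log (Nat.card {g : FreeGroup (Fin k) // wlen L g ≤ R})
          ≤ Real.log (((2 * k + 1) ^ (N + 1) : ℕ) : ℝ) := by gcongr
        _ = ((N:ℝ)+1) * Real.log (2*(k:ℝ)+1) := by
            push_cast
            rw [Real.log_pow]
            push_cast
            ring
    have hNle : (N : ℝ) ≤ R/ε + 1 := le_of_lt (Nat.ceil_lt_add_one (div_nonneg hR0.le hε.le))
    have hεinv : (0:ℝ) < 1/ε := by positivity
    have h2 : ((N:ℝ)+1) * Real.log (2*(k:ℝ)+1) ≤ ((1/ε + 2) * Real.log (2*(k:ℝ)+1)) * R := by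
      have e1 : (N:ℝ) + 1 ≤ (1/ε + 2) * R := by
        have : R/ε = R * (1/ε) := by ring
        nlinarith
      calc ((N:ℝ)+1) * Real.log (2*(k:ℝ)+1)
          ≤ ((1/ε + 2) * R) * Real.log (2*(k:ℝ)+1) :=
            mul_le_mul_of_nonneg_right e1 hlog2k
        _ = ((1/ε + 2) * Real.log (2*(k:ℝ)+1)) * R := by ring
    rw [div_le_iff₀ hR0]
    linarith
  -- the lower bound, eventually in R
  have hlow : ∀ᶠ R in atTop, Real.log (1/t) / 4 ≤
      Real.log (Nat.card {g : FreeGroup (Fin k) // wlen L g ≤ R}) / R := by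
    filter_upwards [eventually_ge_atTop (4:ℝ)] with R hR4
    have hR0 : (0:ℝ) < R := by linarith
    haveI hfin := ball_finite hε hL R
    set q := ⌈1/t⌉₊ with hqdef
    set m := ⌊R/2⌋₊ with hmdef
    have hq1 : (1:ℝ)/t ≤ (q:ℝ) := Nat.le_ceil _
    have hq2 : (q:ℝ) < 1/t + 1 := Nat.ceil_lt_add_one (by positivity)
    have hmR : (m:ℝ) ≤ R/2 := Nat.floor_le (by positivity)
    have hmR4 : R/4 ≤ (m:ℝ) := by
      have := Nat.sub_one_lt_floor (R/2)
      rw [← hmdef] at this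
      linarith
    clear_value q m
    set F : (Fin m → Fin q) → FreeGroup (Fin k) := fun s =>
      FreeGroup.mk (encL (a, true) (b, true) (List.ofFn fun i => ((s i : ℕ)))) with hFdef
    have hFw : ∀ s, wlen L (F s) ≤ R := by
      intro s
      set l : List ℕ := List.ofFn fun i => ((s i : ℕ)) with hl
      have h1 : wlen L (F s) = (l.sum : ℝ) * L a + (l.length : ℝ) * L b := by
        rw [hFdef]
        rw [wlen_mk L (encL_pos a b l)]
        exact encL_sum (a, true) (b, true) (fun z => L z.1) l
      have hlen : (l.length : ℝ) = (m:ℝ) := by simp [hl]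
      clear_value l
      have hsum : (l.sum : ℝ) ≤ (m:ℝ) * ((q:ℝ) - 1) := by
        have e1 : (l.sum : ℝ) = ∑ i : Fin m, ((s i : ℕ) : ℝ) := by
          rw [hl, List.sum_ofFn]
          push_cast
          rfl
        rw [e1]
        calc ∑ i : Fin m, ((s i : ℕ) : ℝ) ≤ ∑ _i : Fin m, ((q:ℝ) - 1) := by
              apply Finset.sum_le_sum
              intro i _
              have h2 : ((s i : ℕ) : ℝ) + 1 ≤ (q:ℝ) := by exact_mod_cast (s i).is_lt
              linarith
          _ = (m:ℝ) * ((q:ℝ) - 1) := by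
              rw [Finset.sum_const, Finset.card_univ, Fintype.card_fin, nsmul_eq_mul]
      rw [h1, hLa, hLb, hlen]
      have hqt : ((q:ℝ)-1) * t ≤ 1 := by
        have h3 : (q:ℝ) - 1 ≤ 1/t := by linarith
        calc ((q:ℝ)-1)*t ≤ (1/t)*t := mul_le_mul_of_nonneg_right h3 (le_of_lt ht0)
          _ = 1 := by field_simp
      have hm0 : (0:ℝ) ≤ (m:ℝ) := Nat.cast_nonneg m
      have hA : (l.sum:ℝ)*t ≤ (m:ℝ)*(((q:ℝ)-1)*t) := by
        nlinarith [mul_le_mul_of_nonneg_right hsum (le_of_lt ht0)]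
      have hB : (m:ℝ)*(((q:ℝ)-1)*t) ≤ (m:ℝ) := by
        nlinarith [mul_le_mul_of_nonneg_left hqt hm0]
      have hC : (m:ℝ)*(1-((k:ℝ)-1)*t) ≤ (m:ℝ) := by
        nlinarith [mul_nonneg hm0 (mul_nonneg (by linarith : (0:ℝ) ≤ (k:ℝ)-1) ht0.le)]
      linarith
    have hFinj : Function.Injective F := by
      intro s1 s2 h
      have h2 : encL ((a, true) : Fin k × Bool) (b, true) (List.ofFn fun i => ((s1 i : ℕ)))
          = encL (a, true) (b, true) (List.ofFn fun i => ((s2 i : ℕ))) := by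
        have h3 := congrArg FreeGroup.toWord h
        rw [hFdef] at h3
        simp only [FreeGroup.toWord_mk] at h3
        rwa [reduce_eq_self_of_pos (encL_pos a b _),
          reduce_eq_self_of_pos (encL_pos a b _)] at h3
      have h4 := List.ofFn_inj.mp (encL_injective hab h2)
      funext i
      exact Fin.val_injective (congrFun h4 i)
    have hcard : q ^ m ≤ Nat.card {g : FreeGroup (Fin k) // wlen L g ≤ R} := by
      have hinj : Function.Injective (fun s : Fin m → Fin q =>
          (⟨F s, hFw s⟩ : {g : FreeGroup (Fin k) // wlen L g ≤ R})) := by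
        intro s1 s2 h
        exact hFinj (congrArg Subtype.val h)
      have h5 := Nat.card_le_card_of_injective _ hinj
      simpa [Nat.card_eq_fintype_card] using h5
    have hpow : (0:ℝ) < ((1:ℝ)/t) ^ m := by positivity
    have hcast : ((1:ℝ)/t) ^ m ≤ ((Nat.card {g : FreeGroup (Fin k) // wlen L g ≤ R}) : ℝ) := by
      calc ((1:ℝ)/t) ^ m ≤ (q:ℝ) ^ m := by gcongr
        _ = ((q ^ m : ℕ) : ℝ) := by push_cast; ring
        _ ≤ _ := by exact_mod_cast hcard
    have hlogc : (m:ℝ) * Real.log (1/t)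
        ≤ Real.log (Nat.card {g : FreeGroup (Fin k) // wlen L g ≤ R}) := by
      calc (m:ℝ) * Real.log (1/t) = Real.log (((1:ℝ)/t) ^ m) := by rw [Real.log_pow]
        _ ≤ _ := by gcongr
    have hlogt : 0 ≤ Real.log (1/t) := Real.log_nonneg h1t
    rw [div_le_div_iff₀ (by norm_num) hR0]
    linarith [mul_le_mul_of_nonneg_right hmR4 hlogt, hlogc]
  rw [entropy]
  exact le_limsup_of_frequently_le hlow.frequently hbdd

/-- For `ℒ_t = (t, …, t, 1−(k−1)t) ∈ Δ_k`, the volume entropy `h_{ℒ_t}` tends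
to `∞` as `t → 0⁺`. -/
theorem mcshane_stmt8 (k : ℕ) (hk : 2 ≤ k) :
    Tendsto (fun t : ℝ => entropy (fun i : Fin k =>
        if (i : ℕ) < k - 1 then t else 1 - ((k : ℝ) - 1) * t))
      (𝓝[Set.Ioo (0:ℝ) (1 / ((k : ℝ) - 1))] 0) atTop := by
  have h1 : Tendsto (fun t : ℝ => Real.log (1/t) / 4)
      (𝓝[Set.Ioo (0:ℝ) (1 / ((k : ℝ) - 1))] 0) atTop := by
    have hlog : Tendsto Real.log (𝓝[Set.Ioo (0:ℝ) (1 / ((k : ℝ) - 1))] 0) atBot :=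
      Real.tendsto_log_nhdsGT_zero.mono_left
        (nhdsWithin_mono 0 Set.Ioo_subset_Ioi_self)
    have h2 : Tendsto (fun t : ℝ => Real.log (1/t))
        (𝓝[Set.Ioo (0:ℝ) (1 / ((k : ℝ) - 1))] 0) atTop :=
      (tendsto_neg_atBot_atTop.comp hlog).congr fun u => by
        simp [one_div, Real.log_inv]
    exact h2.atTop_div_const (by norm_num)
  refine tendsto_atTop_mono' _ ?_ h1
  filter_upwards [self_mem_nhdsWithin] with t ht
  exact entropy_ge hk ht

end McShane
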